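/- arXiv:1807.01947 — 2 statements merged into one kernel-verified Lean document; each statement's English description precedes it below -/
import Mathlib

section
/- Let a_s(η,k) = -(η - i(A - B))(η - i(A + B)) where A = s + (N+1)/2 and B = √(k(N+k) + s + (N+1)²/4), for real η, real s > 100 with dist(s, ℕ) = 1/2, and integer k ≥ 0. Then on the set where |η - i(A-B)| ≥ s/40, one has c(|η| + s + k)² ≤ |a_s(η,k)| ≤ C(|η| + s + k)² for constants c, C > 0 depending only on N. -/
open Real Complex

lemma abs_sub_I_mul' (η r : ℝ) :
    ‖(η:ℂ) - Complex.I * (r:ℝ)‖ = Real.sqrt (η^2 + r^2) := by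
  rw [Complex.norm_def, Complex.normSq_apply]
  simp [Complex.sub_re, Complex.sub_im, Complex.mul_re, Complex.mul_im]
  ring_nf

lemma sqrt_ge_abs'' (x r : ℝ) : |x| ≤ Real.sqrt (x ^ 2 + r ^ 2) := by
  rw [← Real.sqrt_sq_eq_abs]
  exact Real.sqrt_le_sqrt (by nlinarith [sq_nonneg r])

lemma sqrt_ge_abs2'' (x r : ℝ) : |r| ≤ Real.sqrt (x ^ 2 + r ^ 2) := by
  rw [← Real.sqrt_sq_eq_abs]
  exact Real.sqrt_le_sqrt (by nlinarith [sq_nonneg x])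

lemma sqrt_le_add'' (x r : ℝ) : Real.sqrt (x ^ 2 + r ^ 2) ≤ |x| + |r| := by
  rw [show |x| + |r| = Real.sqrt ((|x| + |r|) ^ 2) from (Real.sqrt_sq (by positivity)).symm]
  exact Real.sqrt_le_sqrt (by nlinarith [mul_nonneg (abs_nonneg x) (abs_nonneg r), _root_.sq_abs x, _root_.sq_abs r])

set_option maxHeartbeats 1600000 in
/-- Two-sided bound `c(|η|+s+k)² ≤ |a_s(η,k)| ≤ C(|η|+s+k)²` for the Mellin multiplier
`a_s(η,k) = -(η - i(A-B))(η - i(A+B))`, `A = s+(N+1)/2`, `B = √(k(N+k)+s+(N+1)²/4)`,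
on the region `|η - i(A-B)| ≥ s/40`, with `c, C` depending only on `N`. -/
theorem stmt14 (N : ℕ) (hN : 2 ≤ N) :
    ∃ c C : ℝ, 0 < c ∧ 0 < C ∧
      ∀ (η s : ℝ) (k : ℕ), 100 < s → (∃ m : ℕ, s = (m : ℝ) + 1 / 2) →
        (let A : ℝ := s + ((N : ℝ) + 1) / 2
         let B : ℝ := Real.sqrt ((k : ℝ) * ((N : ℝ) + (k : ℝ)) + s + ((N : ℝ) + 1) ^ 2 / 4)
         let a : ℂ := -(((η : ℂ) - Complex.I * ((A : ℝ) - B : ℝ)) *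
            ((η : ℂ) - Complex.I * ((A : ℝ) + B : ℝ)))
         s / 40 ≤ ‖(η : ℂ) - Complex.I * ((A : ℝ) - B : ℝ)‖ →
           c * (|η| + s + (k : ℝ)) ^ 2 ≤ ‖a‖ ∧
             ‖a‖ ≤ C * (|η| + s + (k : ℝ)) ^ 2) := by
  refine ⟨1 / (80 * (N:ℝ) + 406), ((N:ℝ) + 4) ^ 2, by positivity, by positivity, ?_⟩
  intro η s k hs _hm
  intro A B a hge
  have hk0 : (0:ℝ) ≤ (k:ℝ) := Nat.cast_nonneg k
  have hN0 : (2:ℝ) ≤ (N:ℝ) := by exact_mod_cast hN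
  have hA : A = s + ((N : ℝ) + 1) / 2 := rfl
  have harg : (0:ℝ) ≤ (k : ℝ) * ((N : ℝ) + (k : ℝ)) + s + ((N : ℝ) + 1) ^ 2 / 4 := by
    nlinarith [sq_nonneg ((N:ℝ)+1), mul_nonneg hk0 (by linarith : (0:ℝ) ≤ (N:ℝ) + (k:ℝ))]
  have hB0 : 0 ≤ B := Real.sqrt_nonneg _
  have hBsq : B ^ 2 = (k : ℝ) * ((N : ℝ) + (k : ℝ)) + s + ((N : ℝ) + 1) ^ 2 / 4 :=
    Real.sq_sqrt harg
  have hBk : (k:ℝ) ≤ B := by nlinarith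
  have hBle : B ≤ (k:ℝ) + ((N:ℝ) + 1) / 2 + s := by nlinarith
  -- abbreviations
  set T : ℝ := |η| + s + (k:ℝ) with hT
  have hη0 : 0 ≤ |η| := abs_nonneg η
  have hT0 : 0 ≤ T := by positivity
  set f₁ : ℝ := Real.sqrt (η ^ 2 + (A - B) ^ 2) with hf1
  set f₂ : ℝ := Real.sqrt (η ^ 2 + (A + B) ^ 2) with hf2
  have hf10 : 0 ≤ f₁ := Real.sqrt_nonneg _
  have hf20 : 0 ≤ f₂ := Real.sqrt_nonneg _
  have habs : ‖a‖ = f₁ * f₂ := by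
    show ‖-(((η : ℂ) - Complex.I * ((A : ℝ) - B : ℝ)) *
            ((η : ℂ) - Complex.I * ((A : ℝ) + B : ℝ)))‖ = _
    rw [norm_neg, norm_mul, abs_sub_I_mul', abs_sub_I_mul']
  have hge' : s / 40 ≤ f₁ := by rwa [abs_sub_I_mul'] at hge
  have hf1η : |η| ≤ f₁ := sqrt_ge_abs'' η (A - B)
  have hf1r : |A - B| ≤ f₁ := sqrt_ge_abs2'' η (A - B)
  have hf2η : |η| ≤ f₂ := sqrt_ge_abs'' η (A + B)
  have hf2r : |A + B| ≤ f₂ := sqrt_ge_abs2'' η (A + B)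
  have hf1up : f₁ ≤ |η| + |A - B| := sqrt_le_add'' η (A - B)
  have hf2up : f₂ ≤ |η| + |A + B| := sqrt_le_add'' η (A + B)
  have hApos : 0 ≤ A := by rw [hA]; linarith
  have hABabs : |A + B| = A + B := abs_of_nonneg (by linarith)
  have hABsub : |A - B| ≤ A + B := by
    rw [abs_le]; constructor <;> linarith
  have hBA : B - A ≤ |A - B| := by
    rw [abs_sub_comm]; exact le_abs_self _
  clear_value A B a T f₁ f₂
  clear hge hf1 hf2
  -- upper bound factor
  have hfac : |η| + (A + B) ≤ ((N:ℝ) + 4) * T := by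
    rw [hA, hT]
    nlinarith
  have hupper : ‖a‖ ≤ ((N:ℝ) + 4) ^ 2 * T ^ 2 := by
    rw [habs]
    have h1 : f₁ ≤ ((N:ℝ) + 4) * T := by
      calc f₁ ≤ |η| + |A - B| := hf1up
        _ ≤ |η| + (A + B) := by linarith
        _ ≤ _ := hfac
    have h2 : f₂ ≤ ((N:ℝ) + 4) * T := by
      calc f₂ ≤ |η| + |A + B| := hf2up
        _ = |η| + (A + B) := by rw [hABabs]
        _ ≤ _ := hfac
    nlinarith [mul_le_mul h1 h2 hf20 (by positivity : (0:ℝ) ≤ ((N:ℝ) + 4) * T)]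
  -- lower bound
  have hl1 : T ≤ (40 * (N:ℝ) + 203) * f₁ := by
    have h3 : B - A ≤ f₁ := le_trans hBA hf1r
    rw [hA] at h3
    rw [hT]
    nlinarith [mul_nonneg (by linarith : (0:ℝ) ≤ (N:ℝ)+1) (by linarith : (0:ℝ) ≤ s - 100), mul_le_mul_of_nonneg_left hge' (by linarith : (0:ℝ) ≤ (N:ℝ)+1)]
  have hl2 : T ≤ 2 * f₂ := by
    have : A + B ≤ f₂ := by rw [← hABabs]; exact hf2r
    rw [hA] at this
    rw [hT]
    linarith
  have hlower : 1 / (80 * (N:ℝ) + 406) * T ^ 2 ≤ ‖a‖ := by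
    rw [habs]
    have hD : (0:ℝ) < 80 * (N:ℝ) + 406 := by positivity
    rw [show 1 / (80 * (N:ℝ) + 406) * T ^ 2 = T ^ 2 / (80 * (N:ℝ) + 406) by ring,
      div_le_iff₀ hD]
    have := mul_le_mul hl1 hl2 hT0 (by positivity)
    nlinarith
  exact ⟨hlower, hupper⟩
end

section
/- Suppose u ∈ L²(B₁) ∩ L^{2^*}(B₁) with 2^* > 2 satisfies ∫_{B_r} u² ψ dz dt = O(r^l) for all l > 0 as r → 0⁺, where ψ(z,t) = |z|²/(|z|^4+4t²)^{1/2}, and suppose for some q ∈ (2, 2^*) the weight ψ^{-1/(q-1)} is integrable on B₁. Then ∫_{B_r} |u| dz dt = O(r^k) for all k > 0 as r → 0⁺. -/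
open MeasureTheory ENNReal

/-- The gauge ball `B_r = {(z,t) : (|z|⁴+4t²)^{1/4} < r}` in `ℝ^N × ℝ`. -/
def gBall (N : ℕ) (r : ℝ) : Set (EuclideanSpace ℝ (Fin N) × ℝ) :=
  {p | (‖p.1‖ ^ 4 + 4 * p.2 ^ 2) ^ ((1 : ℝ) / 4) < r}

/-- The degenerate weight `ψ(z,t) = |z|²/(|z|⁴+4t²)^{1/2}`. -/
noncomputable def psiW (N : ℕ) (p : EuclideanSpace ℝ (Fin N) × ℝ) : ℝ :=
  ‖p.1‖ ^ 2 / Real.sqrt (‖p.1‖ ^ 4 + 4 * p.2 ^ 2)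

/-- Three-function Hölder inequality for lintegrals. -/
private lemma holder3 {α : Type*} [MeasurableSpace α] {μ : Measure α}
    {f g h : α → ℝ≥0∞} (hf : AEMeasurable f μ) (hg : AEMeasurable g μ) (hh : AEMeasurable h μ)
    {a b c : ℝ} (ha : 0 ≤ a) (hb : 0 ≤ b) (hc : 0 ≤ c) (habc : a + b + c = 1) :
    ∫⁻ x, f x ^ a * g x ^ b * h x ^ c ∂μ ≤
      (∫⁻ x, f x ∂μ) ^ a * (∫⁻ x, g x ∂μ) ^ b * (∫⁻ x, h x ∂μ) ^ c := by
  have key := ENNReal.lintegral_prod_norm_pow_le (μ := μ) (Finset.univ : Finset (Fin 3))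
    (f := ![f, g, h]) (fun i _ => by fin_cases i <;> assumption)
    (p := ![a, b, c]) (by simp [Fin.sum_univ_three]; linarith)
    (fun i _ => by fin_cases i <;> assumption)
  simpa [Fin.prod_univ_three, mul_assoc] using key

private lemma psiW_nonneg (N : ℕ) (p : EuclideanSpace ℝ (Fin N) × ℝ) : 0 ≤ psiW N p :=
  div_nonneg (by positivity) (Real.sqrt_nonneg _)

private lemma psiW_le_one (N : ℕ) (p : EuclideanSpace ℝ (Fin N) × ℝ) : psiW N p ≤ 1 := by
  unfold psiW
  apply div_le_one_of_le₀
  · rw [show ‖p.1‖ ^ 2 = Real.sqrt ((‖p.1‖ ^ 2) ^ 2) from (Real.sqrt_sq (by positivity)).symm]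
    apply Real.sqrt_le_sqrt
    nlinarith [sq_nonneg p.2]
  · exact Real.sqrt_nonneg _

private lemma psiW_pos (N : ℕ) (p : EuclideanSpace ℝ (Fin N) × ℝ) (hz : p.1 ≠ 0) :
    0 < psiW N p := by
  unfold psiW
  have h1 : 0 < ‖p.1‖ := norm_pos_iff.mpr hz
  apply div_pos (by positivity)
  apply Real.sqrt_pos.mpr
  nlinarith [pow_pos h1 4, sq_nonneg p.2]

private lemma psiW_measurable (N : ℕ) : Measurable (psiW N) := by
  unfold psiW
  exact ((measurable_fst.norm.pow measurable_const)).div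
    ((((measurable_fst.norm.pow measurable_const)).add
      ((measurable_snd.pow measurable_const).const_mul 4)).sqrt)

private lemma rpow_decomp {x w a b c s e : ℝ} (hx : 0 ≤ x) (hw : 0 < w)
    (h1 : 2 * a + s * b = 1) (h2 : a + e * c = 0) :
    x = (x ^ (2:ℝ) * w) ^ a * (x ^ s) ^ b * (w ^ e) ^ c := by
  rw [Real.mul_rpow (Real.rpow_nonneg hx _) hw.le]
  rw [← Real.rpow_mul hx, ← Real.rpow_mul hx, ← Real.rpow_mul hw.le]
  rw [show x ^ (2*a) * w ^ a * x ^ (s*b) * w ^ (e*c)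
      = (x ^ (2*a) * x ^ (s*b)) * (w ^ a * w ^ (e*c)) from by ring]
  rw [← Real.rpow_add' hx (by rw [h1]; norm_num), ← Real.rpow_add hw, h1,
    show a + e * c = 0 from h2]
  simp

/-- If `u ∈ L²(B₁) ∩ L^{2^*}(B₁)` vanishes to infinite order at the origin with respect to
the weight `ψ`, and `ψ^{-1/(q-1)}` is integrable on `B₁` for some `q ∈ (2,2^*)`, then
`u` vanishes to infinite order in the `L¹` mean. -/
theorem stmt17 (N : ℕ) (hN : 2 ≤ N) (u : EuclideanSpace ℝ (Fin N) × ℝ → ℝ)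
    (hu2 : MemLp u 2 (volume.restrict (gBall N 1)))
    (hu2s : MemLp u (ENNReal.ofReal (2 * ((N : ℝ) + 2) / (N : ℝ)))
      (volume.restrict (gBall N 1)))
    (q : ℝ) (hq1 : 2 < q) (hq2 : q < 2 * ((N : ℝ) + 2) / (N : ℝ))
    (hpsi : IntegrableOn (fun p => psiW N p ^ (-(1 / (q - 1)))) (gBall N 1))
    (hvan : ∀ l : ℝ, 0 < l → ∃ C > 0, ∃ r0 > 0, ∀ r : ℝ, 0 < r → r < r0 →
      (∫ p in gBall N r, (u p) ^ 2 * psiW N p) ≤ C * r ^ l) :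
    ∀ k : ℝ, 0 < k → ∃ C > 0, ∃ r0 > 0, ∀ r : ℝ, 0 < r → r < r0 →
      (∫ p in gBall N r, |u p|) ≤ C * r ^ k := by
  intro k hk
  set s : ℝ := 2 * ((N : ℝ) + 2) / (N : ℝ) with hs_def
  have hs2 : 2 < s := lt_trans hq1 hq2
  have hq0 : 0 < q - 1 := by linarith
  have hD : 0 < s * q - 2 := by nlinarith
  set a : ℝ := (s - 1) / (s * q - 2) with ha_def
  set b : ℝ := (q - 2) / (s * q - 2) with hb_def
  set c : ℝ := a * (q - 1) with hc_def
  have ha : 0 < a := div_pos (by linarith) hD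
  have hb : 0 < b := div_pos (by linarith) hD
  have hc : 0 < c := mul_pos ha hq0
  have habc : a + b + c = 1 := by
    rw [ha_def, hb_def, hc_def, ha_def]; field_simp; ring
  have hexp : 2 * a + s * b = 1 := by
    rw [ha_def, hb_def]; field_simp; ring
  -- measurability
  have hgopen : ∀ r : ℝ, MeasurableSet (gBall N r) := by
    intro r
    have hcont : Continuous fun p : EuclideanSpace ℝ (Fin N) × ℝ =>
        (‖p.1‖ ^ 4 + 4 * p.2 ^ 2) ^ ((1 : ℝ) / 4) :=
      (Real.continuous_rpow_const (by norm_num)).comp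
        (((continuous_fst.norm.pow 4)).add (continuous_const.mul (continuous_snd.pow 2)))
    exact (isOpen_Iio.preimage hcont).measurableSet
  have hsub : ∀ r : ℝ, r ≤ 1 → gBall N r ⊆ gBall N 1 :=
    fun r hr p hp => lt_of_lt_of_le hp hr
  have hmono : ∀ r : ℝ, r ≤ 1 →
      (volume.restrict (gBall N r)) ≤ (volume.restrict (gBall N 1)) :=
    fun r hr => Measure.restrict_mono (hsub r hr) le_rfl
  -- a.e. positivity of psi
  have hNontriv : Nontrivial (EuclideanSpace ℝ (Fin N)) := by
    have : (0 : ℕ) < N := by omega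
    exact ⟨⟨0, EuclideanSpace.single ⟨0, this⟩ 1, by
      intro h
      have := congrArg (fun f => f ⟨0, this⟩) h.symm
      simp [EuclideanSpace.single] at this⟩⟩
  have hnull : volume {p : EuclideanSpace ℝ (Fin N) × ℝ | p.1 = 0} = 0 := by
    have heq : {p : EuclideanSpace ℝ (Fin N) × ℝ | p.1 = 0}
        = ({0} : Set (EuclideanSpace ℝ (Fin N))) ×ˢ (Set.univ : Set ℝ) := by
      ext ⟨z, t⟩; simp [eq_comm]
    rw [heq, MeasureTheory.Measure.volume_eq_prod, Measure.prod_prod]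
    simp [measure_singleton]
  have hpsipos : ∀ᵐ p : EuclideanSpace ℝ (Fin N) × ℝ, 0 < psiW N p := by
    rw [MeasureTheory.ae_iff]
    refine measure_mono_null (fun p hp => ?_) hnull
    by_contra hz
    exact hp (psiW_pos N p hz)
  -- finite measure of B_1
  have hfin : volume (gBall N 1) < ⊤ := by
    have hsub2 : gBall N 1 ⊆ (Metric.ball (0 : EuclideanSpace ℝ (Fin N)) 2) ×ˢ
        (Metric.ball (0 : ℝ) 2) := by
      rintro ⟨z, t⟩ hp
      have hnn : (0:ℝ) ≤ ‖z‖ ^ 4 + 4 * t ^ 2 := by positivity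
      have h1 : ‖z‖ ^ 4 + 4 * t ^ 2 < 1 := by
        by_contra hge
        push_neg at hge
        have := Real.one_le_rpow hge (by norm_num : (0:ℝ) ≤ 1/4)
        exact absurd hp (not_lt.mpr this)
      constructor
      · simp only [Metric.mem_ball, dist_zero_right]
        nlinarith [norm_nonneg z, sq_nonneg (‖z‖^2 - 1), sq_nonneg t]
      · simp only [Metric.mem_ball, Real.dist_eq, sub_zero]
        nlinarith [abs_nonneg t, sq_abs t, pow_nonneg (norm_nonneg z) 4]
    calc volume (gBall N 1)
        ≤ volume ((Metric.ball (0 : EuclideanSpace ℝ (Fin N)) 2) ×ˢ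
          (Metric.ball (0 : ℝ) 2)) := measure_mono hsub2
      _ < ⊤ := by
          rw [MeasureTheory.Measure.volume_eq_prod, Measure.prod_prod]
          exact ENNReal.mul_lt_top measure_ball_lt_top measure_ball_lt_top
  haveI : IsFiniteMeasure (volume.restrict (gBall N 1)) :=
    ⟨by rwa [Measure.restrict_apply_univ]⟩
  -- the constants
  have hs0 : (0:ℝ) < s := by linarith
  have hsne : ENNReal.ofReal s ≠ 0 := by
    simp [ENNReal.ofReal_eq_zero, not_le, hs0]
  have hA : (∫⁻ p in gBall N 1, (‖u p‖₊ : ℝ≥0∞) ^ s) < ⊤ := by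
    have h1 := hu2s.2
    rw [eLpNorm_eq_lintegral_rpow_enorm_toReal hsne (by simp)] at h1
    rw [ENNReal.toReal_ofReal hs0.le] at h1
    have h2 : (0:ℝ) < 1 / s := by positivity
    exact (ENNReal.rpow_lt_top_iff_of_pos h2).mp h1
  have hB : (∫⁻ p in gBall N 1, ENNReal.ofReal (psiW N p ^ (-(1 / (q - 1))))) < ⊤ := by
    have := hpsi.2
    refine lt_of_le_of_lt (lintegral_mono fun p => ?_) this
    rw [← ofReal_norm, Real.norm_eq_abs]
    exact ENNReal.ofReal_le_ofReal (le_abs_self _)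
  set A := (∫⁻ p in gBall N 1, (‖u p‖₊ : ℝ≥0∞) ^ s) with hA_def
  set B := (∫⁻ p in gBall N 1, ENNReal.ofReal (psiW N p ^ (-(1 / (q - 1))))) with hB_def
  -- integrability of u and of u² ψ
  have hu_int : Integrable u (volume.restrict (gBall N 1)) :=
    hu2.integrable (by norm_num)
  have husq : Integrable (fun p => (u p) ^ 2) (volume.restrict (gBall N 1)) :=
    hu2.integrable_sq
  have hw_int : Integrable (fun p => (u p) ^ 2 * psiW N p) (volume.restrict (gBall N 1)) := by
    have := husq.bdd_mul ((psiW_measurable N).aestronglyMeasurable)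
      (c := 1) (Filter.Eventually.of_forall fun p => by
        rw [Real.norm_eq_abs, abs_of_nonneg (psiW_nonneg N p)]
        exact psiW_le_one N p)
    simpa [mul_comm] using this
  -- get the vanishing at order k / a
  obtain ⟨C, hC, r0, hr0, hvC⟩ := hvan (k / a) (by positivity)
  refine ⟨C ^ a * A.toReal ^ b * B.toReal ^ c + 1, by positivity, min r0 1, by positivity,
    fun r hr hrlt => ?_⟩
  have hr1 : r ≤ 1 := le_of_lt (lt_of_lt_of_le hrlt (min_le_right _ _))
  have hrr0 : r < r0 := lt_of_lt_of_le hrlt (min_le_left _ _)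
  set μr := volume.restrict (gBall N r) with hμr
  have hu_mr : AEStronglyMeasurable u μr :=
    hu2.1.mono_measure (hmono r hr1)
  have hu_ae : AEMeasurable u μr := hu_mr.aemeasurable
  -- the three ENNReal functions
  set f : EuclideanSpace ℝ (Fin N) × ℝ → ℝ≥0∞ :=
    fun p => ENNReal.ofReal ((u p) ^ 2 * psiW N p) with hf_def
  set g : EuclideanSpace ℝ (Fin N) × ℝ → ℝ≥0∞ :=
    fun p => (‖u p‖₊ : ℝ≥0∞) ^ s with hg_def
  set h : EuclideanSpace ℝ (Fin N) × ℝ → ℝ≥0∞ :=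
    fun p => ENNReal.ofReal (psiW N p ^ (-(1 / (q - 1)))) with hh_def
  have hf_ae : AEMeasurable f μr :=
    ((hu_ae.pow_const 2).mul (psiW_measurable N).aemeasurable).ennreal_ofReal
  have hg_ae : AEMeasurable g μr :=
    (hu_ae.nnnorm.coe_nnreal_ennreal).pow_const _
  have hh_ae : AEMeasurable h μr :=
    ((hpsi.1.mono_measure (hmono r hr1)).aemeasurable).ennreal_ofReal
  -- pointwise identity a.e.
  have hpt : ∀ᵐ p ∂μr, (‖u p‖₊ : ℝ≥0∞) = f p ^ a * g p ^ b * h p ^ c := by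
    refine ae_restrict_of_ae (hpsipos.mono fun p hψ => ?_)
    have habs : |u p| = ((u p) ^ 2 * psiW N p) ^ a * (|u p| ^ s) ^ b
        * ((psiW N p) ^ (-(1 / (q - 1)))) ^ c := by
      have hup : (u p) ^ 2 = |u p| ^ (2:ℝ) := by
        rw [show ((2:ℝ)) = ((2:ℕ):ℝ) from by norm_num, Real.rpow_natCast]
        exact (sq_abs (u p)).symm
      have h2 : a + (-(1 / (q - 1))) * c = 0 := by
        rw [hc_def]; field_simp; ring
      rw [hup]
      exact rpow_decomp (abs_nonneg _) hψ hexp h2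
    calc (‖u p‖₊ : ℝ≥0∞) = ENNReal.ofReal |u p| := by
          rw [← Real.norm_eq_abs, ofReal_norm, enorm_eq_nnnorm]
      _ = f p ^ a * g p ^ b * h p ^ c := by
          rw [habs, ENNReal.ofReal_mul (by positivity), ENNReal.ofReal_mul (by positivity),
            ← ENNReal.ofReal_rpow_of_nonneg (by positivity) ha.le,
            ← ENNReal.ofReal_rpow_of_nonneg (by positivity) hb.le,
            ← ENNReal.ofReal_rpow_of_nonneg (by positivity) hc.le]
          congr 2
          rw [hg_def, ← ENNReal.ofReal_rpow_of_nonneg (abs_nonneg _) hs0.le,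
            ← Real.norm_eq_abs, ofReal_norm, enorm_eq_nnnorm]
  -- Hölder
  have hholder : (∫⁻ p, (‖u p‖₊ : ℝ≥0∞) ∂μr) ≤
      (∫⁻ p, f p ∂μr) ^ a * (∫⁻ p, g p ∂μr) ^ b * (∫⁻ p, h p ∂μr) ^ c :=
    (lintegral_congr_ae hpt).le.trans (holder3 hf_ae hg_ae hh_ae ha.le hb.le hc.le habc)
  -- bound on the f integral
  have hI2 : (∫⁻ p, f p ∂μr) ≤ ENNReal.ofReal (C * r ^ (k / a)) := by
    have hint : Integrable (fun p => (u p) ^ 2 * psiW N p) μr :=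
      hw_int.mono_measure (hmono r hr1)
    rw [hf_def, hμr, ← MeasureTheory.ofReal_integral_eq_lintegral_ofReal hint
      (Filter.Eventually.of_forall fun p => mul_nonneg (sq_nonneg _) (psiW_nonneg N p))]
    exact ENNReal.ofReal_le_ofReal (hvC r hr hrr0)
  have hIg : (∫⁻ p, g p ∂μr) ≤ A := lintegral_mono' (hmono r hr1) le_rfl
  have hIh : (∫⁻ p, h p ∂μr) ≤ B := lintegral_mono' (hmono r hr1) le_rfl
  have hbound : (∫⁻ p, (‖u p‖₊ : ℝ≥0∞) ∂μr) ≤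
      ENNReal.ofReal (C * r ^ (k / a)) ^ a * A ^ b * B ^ c := by
    refine hholder.trans ?_
    exact mul_le_mul' (mul_le_mul' (ENNReal.rpow_le_rpow hI2 ha.le)
      (ENNReal.rpow_le_rpow hIg hb.le)) (ENNReal.rpow_le_rpow hIh hc.le)
  have hRHS_ne : ENNReal.ofReal (C * r ^ (k / a)) ^ a * A ^ b * B ^ c ≠ ⊤ := by
    apply ENNReal.mul_ne_top
    apply ENNReal.mul_ne_top
    · exact ENNReal.rpow_ne_top_of_nonneg ha.le ENNReal.ofReal_ne_top
    · exact ENNReal.rpow_ne_top_of_nonneg hb.le hA.ne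
    · exact ENNReal.rpow_ne_top_of_nonneg hc.le hB.ne
  -- convert to real integral
  have hInt_eq : (∫ p in gBall N r, |u p|) = (∫⁻ p, (‖u p‖₊ : ℝ≥0∞) ∂μr).toReal := by
    rw [integral_eq_lintegral_of_nonneg_ae (Filter.Eventually.of_forall fun p => abs_nonneg _)
      (hu_mr.norm.congr (Filter.Eventually.of_forall fun p => (Real.norm_eq_abs (u p))))]
    congr 1
    apply lintegral_congr fun p => ?_
    rw [← Real.norm_eq_abs, ofReal_norm, enorm_eq_nnnorm]
  rw [hInt_eq]
  have htoReal : (∫⁻ p, (‖u p‖₊ : ℝ≥0∞) ∂μr).toReal ≤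
      (ENNReal.ofReal (C * r ^ (k / a)) ^ a * A ^ b * B ^ c).toReal :=
    ENNReal.toReal_mono hRHS_ne hbound
  refine htoReal.trans ?_
  rw [ENNReal.toReal_mul, ENNReal.toReal_mul, ← ENNReal.toReal_rpow, ← ENNReal.toReal_rpow,
    ← ENNReal.toReal_rpow, ENNReal.toReal_ofReal (by positivity)]
  have hCr : (C * r ^ (k / a)) ^ a = C ^ a * r ^ k := by
    rw [Real.mul_rpow hC.le (Real.rpow_nonneg hr.le _), ← Real.rpow_mul hr.le]
    congr 1
    field_simp
  rw [hCr]
  have hrk : 0 < r ^ k := Real.rpow_pos_of_pos hr k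
  have hAB : 0 ≤ A.toReal ^ b * B.toReal ^ c :=
    mul_nonneg (Real.rpow_nonneg ENNReal.toReal_nonneg b)
      (Real.rpow_nonneg ENNReal.toReal_nonneg c)
  calc C ^ a * r ^ k * A.toReal ^ b * B.toReal ^ c
      = (C ^ a * A.toReal ^ b * B.toReal ^ c) * r ^ k := by ring
    _ ≤ (C ^ a * A.toReal ^ b * B.toReal ^ c + 1) * r ^ k :=
        mul_le_mul_of_nonneg_right (by linarith) hrk.le
end
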